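/- The q-Hermite polynomials expand in q-Lucas polynomials: H_n(x, (q−1)s | q) = Σ_{k=0}^{⌊n/2⌋} C(n,k)·s^k·L_{n−2k}(x,−s), where H_n(x,s|q) = (x − s·D_q)^n·1 and L_m are the q-Lucas polynomials L_m(x,−s) = l_m(x − (q−1)s·D_q, −s)·1. -/

import Mathlib

open Polynomial

noncomputable section

abbrev Kq : Type := RatFunc ℚ
def q : Kq := RatFunc.X
abbrev Ks : Type := Polynomial Kq
abbrev Ax : Type := Polynomial Ks
def qInt (n : ℕ) : Kq := ∑ i ∈ Finset.range n, q ^ i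
def qDeriv (p : Ax) : Ax :=
  p.sum fun m a => Polynomial.C a * Polynomial.C (Polynomial.C (qInt m)) * X ^ (m - 1)
/-- The operator `t = (mult. by x) − (q−1)s·D_q`. -/
def sA : Ax := Polynomial.C Polynomial.X
def opT (p : Ax) : Ax :=
  X * p - Polynomial.C ((Polynomial.C q - 1) * Polynomial.X) * qDeriv p

lemma qDeriv_zero : qDeriv 0 = 0 := by simp [qDeriv]

lemma qDeriv_add (p r : Ax) : qDeriv (p + r) = qDeriv p + qDeriv r := by
  unfold qDeriv
  rw [Polynomial.sum_add_index] <;> intros <;> simp [add_mul]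

lemma qDeriv_monomial (m : ℕ) (b : Ks) :
    qDeriv (monomial m b) = Polynomial.C b * Polynomial.C (Polynomial.C (qInt m)) * X ^ (m - 1) := by
  unfold qDeriv
  rcases eq_or_ne b 0 with rfl | hb
  · simp
  · rw [Polynomial.sum_monomial_index]
    simp

lemma qDeriv_C_mul (c : Ks) (p : Ax) : qDeriv (Polynomial.C c * p) = Polynomial.C c * qDeriv p := by
  induction p using Polynomial.induction_on' with
  | add p r hp hr => rw [mul_add, qDeriv_add, hp, hr, qDeriv_add, mul_add]
  | monomial m b =>
      rw [show Polynomial.C c * monomial m b = monomial m (c * b) by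
            rw [Polynomial.C_mul_monomial],
          qDeriv_monomial, qDeriv_monomial, map_mul]
      ring

lemma opT_zero : opT 0 = 0 := by simp [opT, qDeriv_zero]

lemma opT_add (p r : Ax) : opT (p + r) = opT p + opT r := by
  simp only [opT, qDeriv_add]; ring

lemma opT_C_mul (c : Ks) (p : Ax) : opT (Polynomial.C c * p) = Polynomial.C c * opT p := by
  simp only [opT, qDeriv_C_mul]; ring

lemma opT_sum {ι : Type*} (t : Finset ι) (f : ι → Ax) :
    opT (∑ i ∈ t, f i) = ∑ i ∈ t, opT (f i) := by
  classical
  induction t using Finset.induction with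
  | empty => simp [opT_zero]
  | insert _ _ h ih => simp [Finset.sum_insert h, opT_add, ih]

lemma opT_const_mul (a k : ℕ) (p : Ax) :
    opT ((a : Ax) * sA ^ k * p) = (a : Ax) * sA ^ k * opT p := by
  have h : (a : Ax) * sA ^ k = Polynomial.C ((a : Ks) * Polynomial.X ^ k) := by
    simp [sA, map_mul, map_pow]
  rw [h]; exact opT_C_mul _ _

/-- Pascal-rule decomposition of the shifted sum. -/
lemma pascalSum (L : ℕ → Ax) (n m : ℕ) :
    ∑ k ∈ Finset.range (m+1), ((n+1).choose k : Ax) * sA ^ k * L (n+1-2*k)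
      = (∑ k ∈ Finset.range (m+1), (n.choose k : Ax) * sA ^ k * L (n+1-2*k))
        + ∑ k ∈ Finset.range m, (n.choose k : Ax) * sA ^ (k+1) * L (n-1-2*k) := by
  rw [Finset.sum_range_succ' (fun k => ((n+1).choose k : Ax) * sA ^ k * L (n+1-2*k)) m,
      Finset.sum_range_succ' (fun k => (n.choose k : Ax) * sA ^ k * L (n+1-2*k)) m]
  have key : ∀ i ∈ Finset.range m,
      ((n+1).choose (i+1) : Ax) * sA ^ (i+1) * L (n+1-2*(i+1))
        = (n.choose (i+1) : Ax) * sA ^ (i+1) * L (n+1-2*(i+1))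
          + (n.choose i : Ax) * sA ^ (i+1) * L (n-1-2*i) := by
    intro i _
    have e : n + 1 - 2*(i+1) = n - 1 - 2*i := by omega
    rw [Nat.choose_succ_succ, Nat.cast_add, e]
    ring
  rw [Finset.sum_congr rfl key, Finset.sum_add_distrib]
  simp only [Nat.choose_zero_right]
  ring

lemma step (L : ℕ → Ax) (h0 : L 0 = 1) (h1 : L 1 = opT 1)
    (h2 : L 2 = opT (opT 1) + 2 * (-sA))
    (hrec : ∀ n : ℕ, L (n + 3) = opT (L (n + 2)) + (-sA) * L (n + 1)) (n : ℕ) :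
    opT (∑ k ∈ Finset.range (n / 2 + 1), (n.choose k : Ax) * sA ^ k * L (n - 2 * k)) =
      ∑ k ∈ Finset.range ((n+1) / 2 + 1), ((n+1).choose k : Ax) * sA ^ k * L (n + 1 - 2 * k) := by
  have TL : ∀ j : ℕ, opT (L (j+2)) = L (j+3) + sA * L (j+1) := by
    intro j; rw [hrec j]; ring
  have T1 : opT (L 1) = L 2 + 2 * sA := by rw [h2, h1]; ring
  have T0 : opT (L 0) = L 1 := by rw [h0, h1]
  rcases Nat.even_or_odd' n with ⟨m, rfl | rfl⟩
  · -- n = 2*m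
    have e1 : 2*m/2 + 1 = m + 1 := by omega
    have e2 : (2*m+1)/2 + 1 = m + 1 := by omega
    rw [e1, e2, opT_sum]
    have key : ∀ k ∈ Finset.range m,
        opT (((2*m).choose k : Ax) * sA ^ k * L (2*m - 2*k))
          = ((2*m).choose k : Ax) * sA ^ k * L (2*m+1-2*k)
            + ((2*m).choose k : Ax) * sA ^ (k+1) * L (2*m-1-2*k) := by
      intro k hk
      rw [Finset.mem_range] at hk
      have e : 2*m - 2*k = (2*m - 2*k - 2) + 2 := by omega
      rw [opT_const_mul, e, TL]
      have e3 : 2*m - 2*k - 2 + 3 = 2*m+1-2*k := by omega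
      have e4 : 2*m - 2*k - 2 + 1 = 2*m-1-2*k := by omega
      rw [e3, e4]; ring
    calc ∑ k ∈ Finset.range (m+1), opT (((2*m).choose k : Ax) * sA ^ k * L (2*m - 2*k))
        = (∑ k ∈ Finset.range m, opT (((2*m).choose k : Ax) * sA ^ k * L (2*m - 2*k)))
            + opT (((2*m).choose m : Ax) * sA ^ m * L (2*m - 2*m)) := Finset.sum_range_succ _ m
      _ = (∑ k ∈ Finset.range m, (((2*m).choose k : Ax) * sA ^ k * L (2*m+1-2*k)
              + ((2*m).choose k : Ax) * sA ^ (k+1) * L (2*m-1-2*k)))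
            + ((2*m).choose m : Ax) * sA ^ m * L (2*m+1-2*m) := by
          rw [Finset.sum_congr rfl key]
          rw [add_right_inj]
          rw [opT_const_mul]
          have : 2*m - 2*m = 0 := by omega
          rw [this, T0]
          congr 2
          omega
      _ = ((∑ k ∈ Finset.range m, ((2*m).choose k : Ax) * sA ^ k * L (2*m+1-2*k))
              + ((2*m).choose m : Ax) * sA ^ m * L (2*m+1-2*m))
            + ∑ k ∈ Finset.range m, ((2*m).choose k : Ax) * sA ^ (k+1) * L (2*m-1-2*k) := by
          rw [Finset.sum_add_distrib]; ring
      _ = (∑ k ∈ Finset.range (m+1), ((2*m).choose k : Ax) * sA ^ k * L (2*m+1-2*k))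
            + ∑ k ∈ Finset.range m, ((2*m).choose k : Ax) * sA ^ (k+1) * L (2*m-1-2*k) := by
          rw [Finset.sum_range_succ]
      _ = ∑ k ∈ Finset.range (m+1), ((2*m+1).choose k : Ax) * sA ^ k * L (2*m+1-2*k) :=
          (pascalSum L (2*m) m).symm
  · -- n = 2*m+1
    have e1 : (2*m+1)/2 + 1 = m + 1 := by omega
    have e2 : (2*m+1+1)/2 + 1 = m + 2 := by omega
    rw [e1, e2, opT_sum]
    have key : ∀ k ∈ Finset.range m,
        opT (((2*m+1).choose k : Ax) * sA ^ k * L (2*m+1 - 2*k))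
          = ((2*m+1).choose k : Ax) * sA ^ k * L (2*m+1+1-2*k)
            + ((2*m+1).choose k : Ax) * sA ^ (k+1) * L (2*m+1-1-2*k) := by
      intro k hk
      rw [Finset.mem_range] at hk
      have e : 2*m+1 - 2*k = (2*m+1 - 2*k - 2) + 2 := by omega
      rw [opT_const_mul, e, TL]
      have e3 : 2*m+1 - 2*k - 2 + 3 = 2*m+1+1-2*k := by omega
      have e4 : 2*m+1 - 2*k - 2 + 1 = 2*m+1-1-2*k := by omega
      rw [e3, e4]; ring
    have hlast : ((2*m+1+1).choose (m+1) : Ax) = ((2*m+1).choose m : Ax) + ((2*m+1).choose m : Ax) := by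
      rw [Nat.choose_succ_succ, Nat.cast_add]
      congr 2
      rw [← Nat.choose_symm (by omega : m + 1 ≤ 2*m+1)]
      congr 1
      omega
    calc ∑ k ∈ Finset.range (m+1), opT (((2*m+1).choose k : Ax) * sA ^ k * L (2*m+1 - 2*k))
        = (∑ k ∈ Finset.range m, opT (((2*m+1).choose k : Ax) * sA ^ k * L (2*m+1 - 2*k)))
            + opT (((2*m+1).choose m : Ax) * sA ^ m * L (2*m+1 - 2*m)) := Finset.sum_range_succ _ m
      _ = (∑ k ∈ Finset.range m, (((2*m+1).choose k : Ax) * sA ^ k * L (2*m+1+1-2*k)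
              + ((2*m+1).choose k : Ax) * sA ^ (k+1) * L (2*m+1-1-2*k)))
            + (((2*m+1).choose m : Ax) * sA ^ m * L (2*m+1+1-2*m)
              + (((2*m+1).choose m : Ax) + ((2*m+1).choose m : Ax)) * sA ^ (m+1) * L 0) := by
          rw [Finset.sum_congr rfl key]
          rw [add_right_inj]
          rw [opT_const_mul]
          have : 2*m+1 - 2*m = 1 := by omega
          rw [this, T1]
          have : 2*m+1+1-2*m = 2 := by omega
          rw [this, h0]
          ring
      _ = ((∑ k ∈ Finset.range m, ((2*m+1).choose k : Ax) * sA ^ k * L (2*m+1+1-2*k))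
              + ((2*m+1).choose m : Ax) * sA ^ m * L (2*m+1+1-2*m))
            + (∑ k ∈ Finset.range m, ((2*m+1).choose k : Ax) * sA ^ (k+1) * L (2*m+1-1-2*k))
            + (((2*m+1).choose m : Ax) + ((2*m+1).choose m : Ax)) * sA ^ (m+1) * L 0 := by
          rw [Finset.sum_add_distrib]; ring
      _ = ((∑ k ∈ Finset.range (m+1), ((2*m+1).choose k : Ax) * sA ^ k * L (2*m+1+1-2*k))
            + ∑ k ∈ Finset.range m, ((2*m+1).choose k : Ax) * sA ^ (k+1) * L (2*m+1-1-2*k))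
            + (((2*m+1).choose m : Ax) + ((2*m+1).choose m : Ax)) * sA ^ (m+1) * L 0 := by
          rw [Finset.sum_range_succ]
      _ = (∑ k ∈ Finset.range (m+1), ((2*m+1+1).choose k : Ax) * sA ^ k * L (2*m+1+1-2*k))
            + ((2*m+1+1).choose (m+1) : Ax) * sA ^ (m+1) * L (2*m+1+1-2*(m+1)) := by
          rw [hlast]
          have hc : 2*m+1+1-2*(m+1) = 0 := by omega
          rw [hc, ← pascalSum L (2*m+1) m]
      _ = ∑ k ∈ Finset.range (m+2), ((2*m+1+1).choose k : Ax) * sA ^ k * L (2*m+1+1-2*k) :=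
          (Finset.sum_range_succ _ (m+1)).symm

/-- `H_n(x,(q−1)s|q) = Σ_{k=0}^{⌊n/2⌋} C(n,k)·s^k·L_{n−2k}(x,−s)`,
where `H_n(x,(q−1)s|q) = (x − (q−1)s·D_q)^n·1` and `L_m(x,−s)` is obtained by
substituting `t = (x·) − (q−1)s·D_q`, `u = −s` into the Lucas polynomial `l_m`
(`l_0 = 1`, `l_1 = t`, `l_2 = t² + 2u`, `l_m = t·l_{m−1} + u·l_{m−2}` for `m ≥ 3`)
and applying to the constant `1`. -/
theorem qHermite_qLucas_expansion (L : ℕ → Ax)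
    (h0 : L 0 = 1)
    (h1 : L 1 = opT 1)
    (h2 : L 2 = opT (opT 1) + 2 * (-sA))
    (hrec : ∀ n : ℕ, L (n + 3) = opT (L (n + 2)) + (-sA) * L (n + 1)) :
    ∀ n : ℕ,
      (fun p : Ax => opT p)^[n] 1 =
        ∑ k ∈ Finset.range (n / 2 + 1),
          (n.choose k : Ax) * sA ^ k * L (n - 2 * k) := by
  intro n
  induction n with
  | zero => simp [h0]
  | succ n ih =>
      rw [Function.iterate_succ_apply']
      rw [ih]
      exact step L h0 h1 h2 hrec n

end
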